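/- arXiv:2508.17111 — 3 statements merged into one kernel-verified Lean document; each statement's English description precedes it below -/
import Mathlib

section
/- Let δ ∈ (0,1) and let J > L > 0 be real constants. Define M(x) = (δ − 1) + (2−δ)·J/(δx) + (1−δ)·L/(δx) − 2(1−δ)·J·L/(δ²x²) for x > 0. Then M is strictly decreasing on [2J/δ, ∞), M(2J/δ) = δ/2, and M(x) → δ − 1 < 0 as x → ∞; consequently M has a unique zero in (2J/δ, ∞). -/
open Real Filter

/-- `M(x) = (δ−1) + (2−δ)·J/(δx) + (1−δ)·L/(δx) − 2(1−δ)·J·L/(δ²x²)`. -/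
noncomputable def Mfun (δ J L x : ℝ) : ℝ :=
  (δ - 1) + (2 - δ) * J / (δ * x) + (1 - δ) * L / (δ * x) -
    2 * (1 - δ) * J * L / (δ ^ 2 * x ^ 2)

/-- For `δ ∈ (0,1)` and `J > L > 0`, the function `M` is strictly decreasing on
`[2J/δ, ∞)`, `M(2J/δ) = δ/2`, `M(x) → δ − 1 < 0` as `x → ∞`, and consequently
`M` has a unique zero in `(2J/δ, ∞)`. -/
theorem stmt15 (δ J L : ℝ) (hδ : δ ∈ Set.Ioo (0 : ℝ) 1) (hL : 0 < L) (hJL : L < J) :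
    StrictAntiOn (Mfun δ J L) (Set.Ici (2 * J / δ)) ∧
    Mfun δ J L (2 * J / δ) = δ / 2 ∧
    Filter.Tendsto (Mfun δ J L) Filter.atTop (nhds (δ - 1)) ∧
    δ - 1 < 0 ∧
    ∃! x, x ∈ Set.Ioi (2 * J / δ) ∧ Mfun δ J L x = 0 := by
  obtain ⟨hδ0, hδ1⟩ := hδ
  have hJ : 0 < J := hL.trans hJL
  have ha : 0 < 2 * J / δ := by positivity
  -- strict antitone
  have hanti : StrictAntiOn (Mfun δ J L) (Set.Ici (2 * J / δ)) := by
    intro x hx y hy hxy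
    simp only [Set.mem_Ici] at hx hy
    have hx0 : 0 < x := lt_of_lt_of_le ha hx
    have hy0 : 0 < y := hx0.trans hxy
    have h2x : 2 * J ≤ δ * x := by rw [div_le_iff₀ hδ0] at hx; linarith
    have h2y : 2 * J < δ * y := by nlinarith
    have heq : Mfun δ J L x - Mfun δ J L y =
        ((y - x) * (δ * x * y * ((2 - δ) * J + (1 - δ) * L)
          - 2 * (1 - δ) * J * L * (x + y))) / (δ ^ 2 * x ^ 2 * y ^ 2) := by
      unfold Mfun
      field_simp
      ring
    have hnum : 0 < (y - x) * (δ * x * y * ((2 - δ) * J + (1 - δ) * L)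
        - 2 * (1 - δ) * J * L * (x + y)) := by
      apply mul_pos (by linarith)
      nlinarith [mul_pos hx0 hy0, mul_pos hL (mul_pos hx0 hy0),
        mul_lt_mul_of_pos_left h2y (mul_pos (mul_pos (by linarith : (0:ℝ) < 1 - δ) hL) hx0),
        mul_le_mul_of_nonneg_left h2x (le_of_lt (mul_pos (mul_pos (by linarith : (0:ℝ) < 1 - δ) hL) hy0)),
        mul_nonneg (mul_pos (mul_pos hδ0 hx0) hy0).le (by nlinarith : (0:ℝ) ≤ (2 - δ) * J - (1 - δ) * L)]
    have : 0 < Mfun δ J L x - Mfun δ J L y := heq ▸ div_pos hnum (by positivity)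
    linarith
  -- value at endpoint
  have hval : Mfun δ J L (2 * J / δ) = δ / 2 := by
    unfold Mfun
    have h1 : δ * (2 * J / δ) = 2 * J := by field_simp
    have h2 : δ ^ 2 * (2 * J / δ) ^ 2 = 4 * J ^ 2 := by field_simp; ring
    rw [h1, h2]
    field_simp
    ring
  -- limit
  have hlim : Filter.Tendsto (Mfun δ J L) Filter.atTop (nhds (δ - 1)) := by
    have hrw : Mfun δ J L = fun x => (δ - 1) + ((2 - δ) * J / δ) * x⁻¹ +
        ((1 - δ) * L / δ) * x⁻¹ - (2 * (1 - δ) * J * L / δ ^ 2) * (x⁻¹ * x⁻¹) := by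
      funext x
      unfold Mfun
      rcases eq_or_ne x 0 with rfl | hx
      · simp
      · field_simp
    rw [hrw]
    have h0 : Tendsto (fun x : ℝ => x⁻¹) atTop (nhds 0) := tendsto_inv_atTop_zero
    have := (((tendsto_const_nhds : Tendsto (fun _ : ℝ => δ - 1) atTop (nhds (δ - 1))).add
        ((h0.const_mul ((2 - δ) * J / δ)))).add
        (h0.const_mul ((1 - δ) * L / δ))).sub
        (((h0.mul h0).const_mul (2 * (1 - δ) * J * L / δ ^ 2)))
    simpa using this
  have hneg : δ - 1 < 0 := by linarith
  refine ⟨hanti, hval, hlim, hneg, ?_⟩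
  -- existence of a point where Mfun < 0
  have hev : ∀ᶠ x in atTop, Mfun δ J L x < 0 := hlim.eventually (eventually_lt_nhds hneg)
  obtain ⟨T, hTa, hTneg⟩ : ∃ T, 2 * J / δ ≤ T ∧ Mfun δ J L T < 0 := by
    obtain ⟨T, h1, h2⟩ := ((eventually_ge_atTop (2 * J / δ)).and hev).exists
    exact ⟨T, h1, h2⟩
  have hcont : ContinuousOn (Mfun δ J L) (Set.Icc (2 * J / δ) T) := by
    have hne : ∀ x ∈ Set.Icc (2 * J / δ) T, δ * x ≠ 0 := fun x hx => by
      have : 0 < x := lt_of_lt_of_le ha hx.1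
      positivity
    have hne2 : ∀ x ∈ Set.Icc (2 * J / δ) T, δ ^ 2 * x ^ 2 ≠ 0 := fun x hx => by
      have : 0 < x := lt_of_lt_of_le ha hx.1
      positivity
    unfold Mfun
    exact (((continuousOn_const.add (continuousOn_const.div
        (continuousOn_const.mul continuousOn_id) hne)).add
        (continuousOn_const.div (continuousOn_const.mul continuousOn_id) hne)).sub
        (continuousOn_const.div (continuousOn_const.mul (continuousOn_pow 2)) hne2))
  have hmem : (0 : ℝ) ∈ Set.Icc (Mfun δ J L T) (Mfun δ J L (2 * J / δ)) := by
    constructor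
    · linarith
    · rw [hval]; positivity
  obtain ⟨x, hxIcc, hx0⟩ := intermediate_value_Icc' hTa hcont hmem
  have hxa : 2 * J / δ < x := by
    rcases lt_or_eq_of_le hxIcc.1 with h | h
    · exact h
    · exfalso
      rw [← h, hval] at hx0
      have : (0:ℝ) < δ / 2 := by positivity
      linarith [hx0]
  refine ⟨x, ⟨hxa, hx0⟩, ?_⟩
  rintro y ⟨hya, hy0⟩
  exact hanti.injOn (Set.mem_Ici.mpr (le_of_lt hya)) (Set.mem_Ici.mpr (le_of_lt hxa)) (by rw [hy0, hx0])
end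

section
/- Let v̄ > 0, δ ∈ (0,1), and let F : [0, v̄] → ℝ be twice continuously differentiable with F(0) = 0, F(v̄) = 1, density f = F' satisfying f(v) > 0 and f'(v) ≤ 0 for all v ∈ [0, v̄] (so F is concave), and 2·f(p) + p·f'(p) ≥ 0 for all p ∈ [0, v̄] (so p ↦ p(1−F(p)) is concave). Then h(v) = 1 − F(v) − (1−δ)·v·f(v) is strictly decreasing on [0, v̄], h(0) = 1 > 0, h(v̄) = −(1−δ)·v̄·f(v̄) < 0, and hence h has a unique zero v̌ ∈ (0, v̄). -/
open Real Set

/-- For a twice continuously differentiable CDF `F` on `[0, v̄]` with positive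
non-increasing density `f = F'` (so `F` is concave) such that `p ↦ p(1−F(p))`
is concave (i.e. `2f(p) + p·f'(p) ≥ 0`), the function
`h(v) = 1 − F(v) − (1−δ)·v·f(v)` is strictly decreasing on `[0, v̄]`, satisfies
`h(0) = 1 > 0` and `h(v̄) = −(1−δ)·v̄·f(v̄) < 0`, and has a unique zero in `(0, v̄)`. -/
theorem stmt18 (vbar δ : ℝ) (hv : 0 < vbar) (hδ : δ ∈ Set.Ioo (0 : ℝ) 1)
    (F f f' : ℝ → ℝ)
    (hF0 : F 0 = 0) (hF1 : F vbar = 1)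
    (hF : ∀ v ∈ Set.Icc (0 : ℝ) vbar, HasDerivAt F (f v) v)
    (hf : ∀ v ∈ Set.Icc (0 : ℝ) vbar, HasDerivAt f (f' v) v)
    (hf'c : ContinuousOn f' (Set.Icc 0 vbar))
    (hfpos : ∀ v ∈ Set.Icc (0 : ℝ) vbar, 0 < f v)
    (hf'le : ∀ v ∈ Set.Icc (0 : ℝ) vbar, f' v ≤ 0)
    (hconc : ∀ p ∈ Set.Icc (0 : ℝ) vbar, 0 ≤ 2 * f p + p * f' p) :
    StrictAntiOn (fun v => 1 - F v - (1 - δ) * v * f v) (Set.Icc 0 vbar) ∧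
    1 - F 0 - (1 - δ) * 0 * f 0 = 1 ∧
    1 - F vbar - (1 - δ) * vbar * f vbar = -((1 - δ) * vbar * f vbar) ∧
    1 - F vbar - (1 - δ) * vbar * f vbar < 0 ∧
    ∃! v, v ∈ Set.Ioo (0 : ℝ) vbar ∧ 1 - F v - (1 - δ) * v * f v = 0 := by
  obtain ⟨hδ0, hδ1⟩ := hδ
  set h : ℝ → ℝ := fun v => 1 - F v - (1 - δ) * v * f v with hh
  have hderiv : ∀ v ∈ Set.Icc (0 : ℝ) vbar,
      HasDerivAt h (-(f v) - (1 - δ) * (f v + v * f' v)) v := by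
    intro v hv'
    have h1 := (hF v hv').const_sub 1
    have h2 : HasDerivAt (fun v => (1 - δ) * v * f v)
        ((1 - δ) * (f v + v * f' v)) v := by
      have : HasDerivAt (fun y => (1 - δ) * y * f y) ((0 * v + (1 - δ) * 1) * f v + (1 - δ) * v * f' v) v := ((hasDerivAt_const v (1 - δ)).mul (hasDerivAt_id v)).mul (hf v hv')
      convert this using 1
      simp only [zero_mul]
      ring
    exact h1.sub h2
  have hderivneg : ∀ v ∈ Set.Icc (0 : ℝ) vbar,
      -(f v) - (1 - δ) * (f v + v * f' v) < 0 := by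
    intro v hv'
    have h1 := hfpos v hv'
    have h2 := hconc v hv'
    nlinarith
  have hcont : ContinuousOn h (Set.Icc 0 vbar) := fun v hv' =>
    ((hderiv v hv').continuousAt).continuousWithinAt
  have hanti : StrictAntiOn h (Set.Icc 0 vbar) := by
    apply StrictAntiOn.mono (s := Set.Icc 0 vbar) ?_ le_rfl
    apply strictAntiOn_of_deriv_neg (convex_Icc 0 vbar) hcont
    intro x hx
    rw [interior_Icc] at hx
    have hx' : x ∈ Set.Icc (0:ℝ) vbar := Set.mem_Icc_of_Ioo hx
    rw [(hderiv x hx').deriv]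
    exact hderivneg x hx'
  have h0 : h 0 = 1 := by simp [hh, hF0]
  have hvb : h vbar = -((1 - δ) * vbar * f vbar) := by simp [hh, hF1]
  have hvbneg : h vbar < 0 := by
    rw [hvb]
    have h3 := hfpos vbar ⟨hv.le, le_rfl⟩
    have h4 : 0 < (1 - δ) * vbar * f vbar :=
      mul_pos (mul_pos (by linarith) hv) h3
    linarith
  refine ⟨hanti, by simp [hF0], by simp [hF1], hvbneg, ?_⟩
  have hmem : (0 : ℝ) ∈ Set.Ioo (h vbar) (h 0) := ⟨hvbneg, by rw [h0]; norm_num⟩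
  obtain ⟨v, hvmem, hv0⟩ := intermediate_value_Ioo' hv.le hcont hmem
  refine ⟨v, ⟨hvmem, hv0⟩, ?_⟩
  rintro w ⟨hwmem, hw0⟩
  have h1 : w ∈ Set.Icc (0:ℝ) vbar := Set.mem_Icc_of_Ioo hwmem
  have h2 : v ∈ Set.Icc (0:ℝ) vbar := Set.mem_Icc_of_Ioo hvmem
  have heq : h w = h v := by rw [hv0]; exact hw0
  exact hanti.injOn h1 h2 heq
end

section
/- Let n ≥ 3 be an integer, ω₀ > 1, v̄ > 0, and let F : [0, v̄] → ℝ be twice continuously differentiable with F(0) = 0, F(v̄) = 1, density f = F' satisfying f(v) > 0 and f'(v) ≤ 0 for all v ∈ [0, v̄] (so F is concave). Then the function J̃_F(v) = Σ_{m=0}^{n−1} binom(n−1, m) · ln(m+ω₀) · F(v)^m · (1 − F(v))^{n−1−m} is strictly concave on [0, v̄]: J̃_F''(v) < 0 for all v ∈ [0, v̄]. -/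
open Real Finset

/-- Expected social-network benefit at threshold `v` when valuations are i.i.d.
with CDF `F`: `J̃_F(v) = Σ_{m=0}^{n−1} C(n−1,m)·ln(m+ω₀)·F(v)^m·(1−F(v))^{n−1−m}`. -/
noncomputable def JF (n : ℕ) (ω₀ : ℝ) (F : ℝ → ℝ) (v : ℝ) : ℝ :=
  ∑ m ∈ Finset.range n, (Nat.choose (n - 1) m : ℝ) * Real.log ((m : ℝ) + ω₀) *
    (F v) ^ m * (1 - F v) ^ (n - 1 - m)


noncomputable def Bern (k : ℕ) (b : ℕ → ℝ) (x : ℝ) : ℝ :=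
  ∑ m ∈ Finset.range (k+1), (k.choose m : ℝ) * b m * x ^ m * (1 - x) ^ (k - m)

lemma Bern_hasDerivAt (k : ℕ) (b : ℕ → ℝ) (x : ℝ) :
    HasDerivAt (Bern (k+1) b) ((k+1 : ℝ) * Bern k (fun m => b (m+1) - b m) x) x := by
  have h : HasDerivAt (Bern (k+1) b)
      (∑ m ∈ Finset.range (k+2),
        (((k+1).choose m : ℝ) * b m * ((m : ℝ) * x ^ (m-1)) * (1-x) ^ (k+1-m)
         + ((k+1).choose m : ℝ) * b m * x ^ m *
            ((k+1-m : ℕ) * (1-x) ^ (k+1-m-1) * (-1)))) x := by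
    apply HasDerivAt.fun_sum
    intro m _
    have h1 : HasDerivAt (fun x : ℝ => ((k+1).choose m : ℝ) * b m * x ^ m)
        (((k+1).choose m : ℝ) * b m * ((m : ℝ) * x ^ (m-1))) x :=
      (hasDerivAt_pow m x).const_mul _
    have h2 : HasDerivAt (fun x : ℝ => (1 - x) ^ (k+1-m))
        ((k+1-m : ℕ) * (1-x) ^ (k+1-m-1) * (-1)) x :=
      ((hasDerivAt_id x).const_sub 1).pow _
    simpa [Bern, mul_comm, mul_assoc, mul_left_comm] using h1.fun_mul h2
  convert h using 1
  rw [Finset.sum_add_distrib]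
  have hS1 : (∑ m ∈ Finset.range (k+2),
      ((k+1).choose m : ℝ) * b m * ((m : ℝ) * x ^ (m-1)) * (1-x) ^ (k+1-m))
      = ∑ m ∈ Finset.range (k+1),
        (k+1 : ℝ) * ((k.choose m : ℝ) * b (m+1) * x ^ m * (1-x) ^ (k-m)) := by
    rw [Finset.sum_range_succ']
    simp only [Nat.cast_zero, zero_mul, mul_zero, add_zero]
    apply Finset.sum_congr rfl
    intro m hm
    have hc : ((k+1).choose (m+1) : ℝ) * (m+1 : ℝ) = (k+1 : ℝ) * (k.choose m : ℝ) := by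
      have h0 := Nat.add_one_mul_choose_eq k m
      have h1 : (k+1) * k.choose m = (k+1).choose (m+1) * (m+1) := h0
      exact_mod_cast h1.symm
    have e1 : m + 1 - 1 = m := by omega
    have e2 : k + 1 - (m + 1) = k - m := by omega
    rw [e1, e2]
    push_cast
    linear_combination (b (m+1) * x^m * (1-x)^(k-m)) * hc
  have hS2 : (∑ m ∈ Finset.range (k+2),
      ((k+1).choose m : ℝ) * b m * x ^ m * ((k+1-m : ℕ) * (1-x) ^ (k+1-m-1) * (-1)))
      = ∑ m ∈ Finset.range (k+1),
        -((k+1 : ℝ) * ((k.choose m : ℝ) * b m * x ^ m * (1-x) ^ (k-m))) := by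
    rw [Finset.sum_range_succ]
    simp only [Nat.sub_self, Nat.cast_zero, zero_mul, mul_zero, add_zero]
    apply Finset.sum_congr rfl
    intro m hm
    have hmk : m ≤ k := by simpa using Nat.lt_succ_iff.mp (Finset.mem_range.mp hm)
    have hc : ((k+1).choose m : ℝ) * ((k+1-m : ℕ) : ℝ) = (k+1 : ℝ) * (k.choose m : ℝ) := by
      have h1 : k.choose m * (k+1) = (k+1).choose m * (k+1-m) := Nat.choose_mul_succ_eq k m
      exact_mod_cast (by rw [← h1]; ring : ((k+1).choose m * (k+1-m) : ℕ) = (k+1) * k.choose m)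
    have e2 : k + 1 - m - 1 = k - m := by omega
    rw [e2]
    linear_combination (-(b m * x^m * (1-x)^(k-m))) * hc
  rw [hS1, hS2, ← Finset.sum_add_distrib]
  rw [Bern, Finset.mul_sum]
  apply Finset.sum_congr rfl
  intro m _
  ring

lemma Bern_pos (k : ℕ) (b : ℕ → ℝ) (hb : ∀ m, m ≤ k → 0 < b m) {x : ℝ}
    (hx : x ∈ Set.Icc (0:ℝ) 1) : 0 < Bern k b x := by
  obtain ⟨hx0, hx1⟩ := hx
  have hterm : ∀ m ∈ Finset.range (k+1),
      0 ≤ (k.choose m : ℝ) * b m * x ^ m * (1 - x) ^ (k - m) := by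
    intro m hm
    have hmk : m ≤ k := Nat.lt_succ_iff.mp (Finset.mem_range.mp hm)
    have h1 := (hb m hmk).le
    have h2 : (0:ℝ) ≤ 1 - x := by linarith
    have h3 : (0:ℝ) ≤ (k.choose m : ℝ) := Nat.cast_nonneg _
    exact mul_nonneg (mul_nonneg (mul_nonneg h3 h1) (pow_nonneg hx0 m)) (pow_nonneg h2 _)
  rcases lt_or_eq_of_le hx1 with h1 | h1
  · apply Finset.sum_pos' hterm
    refine ⟨0, by simp, ?_⟩
    have h2 : (0:ℝ) < 1 - x := by linarith
    have : 0 < (1 - x) ^ (k - 0) := pow_pos h2 _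
    simpa using mul_pos (by simpa using hb 0 (Nat.zero_le k)) this
  · apply Finset.sum_pos' hterm
    refine ⟨k, by simp, ?_⟩
    subst h1
    simpa [Nat.sub_self] using hb k le_rfl

lemma Bern_neg (k : ℕ) (b : ℕ → ℝ) (hb : ∀ m, m ≤ k → b m < 0) {x : ℝ}
    (hx : x ∈ Set.Icc (0:ℝ) 1) : Bern k b x < 0 := by
  have e : Bern k (fun m => -b m) x = -Bern k b x := by
    simp only [Bern, ← Finset.sum_neg_distrib]
    exact Finset.sum_congr rfl fun m _ => by ring
  have := Bern_pos k (fun m => -b m) (fun m hm => neg_pos.mpr (hb m hm)) hx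
  rw [e] at this; linarith


/-- For a twice continuously differentiable CDF `F` on `[0, v̄]` with positive
non-increasing density `f = F'` (so `F` is concave), the function `J̃_F` is
strictly concave on `[0, v̄]`, with second derivative strictly negative there. -/
theorem stmt19 (n : ℕ) (hn : 3 ≤ n) (ω₀ vbar : ℝ) (hω : 1 < ω₀) (hv : 0 < vbar)
    (F f f' : ℝ → ℝ)
    (hF0 : F 0 = 0) (hF1 : F vbar = 1)
    (hF : ∀ v ∈ Set.Icc (0 : ℝ) vbar, HasDerivAt F (f v) v)
    (hf : ∀ v ∈ Set.Icc (0 : ℝ) vbar, HasDerivAt f (f' v) v)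
    (hf'c : ContinuousOn f' (Set.Icc 0 vbar))
    (hfpos : ∀ v ∈ Set.Icc (0 : ℝ) vbar, 0 < f v)
    (hf'le : ∀ v ∈ Set.Icc (0 : ℝ) vbar, f' v ≤ 0) :
    StrictConcaveOn ℝ (Set.Icc 0 vbar) (JF n ω₀ F) ∧
    ∀ g h : ℝ → ℝ,
      (∀ v ∈ Set.Icc (0 : ℝ) vbar, HasDerivAt (JF n ω₀ F) (g v) v) →
      (∀ v ∈ Set.Icc (0 : ℝ) vbar, HasDerivAt g (h v) v) →
      ∀ v ∈ Set.Icc (0 : ℝ) vbar, h v < 0 := by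
  obtain ⟨j, rfl⟩ : ∃ j, n = j + 3 := ⟨n - 3, by omega⟩
  set a : ℕ → ℝ := fun m => Real.log ((m : ℝ) + ω₀) with ha
  set Δa : ℕ → ℝ := fun m => a (m+1) - a m with hΔa
  set Δ₂a : ℕ → ℝ := fun m => Δa (m+1) - Δa m with hΔ₂a
  -- positivity of first differences, negativity of second differences
  have hωpos : ∀ m : ℕ, (0:ℝ) < (m : ℝ) + ω₀ := fun m => by positivity
  have hΔpos : ∀ m, 0 < Δa m := by
    intro m
    have : a m < a (m+1) := by
      apply Real.log_lt_log (hωpos m)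
      push_cast; linarith
    simpa [hΔa] using sub_pos.mpr this
  have hΔ₂neg : ∀ m, Δ₂a m < 0 := by
    intro m
    set t : ℝ := (m : ℝ) + ω₀ with ht
    have htpos : 0 < t := hωpos m
    have e1 : a (m+1) = Real.log (t + 1) := by simp [ha, ht]; ring_nf
    have e2 : a (m+2) = Real.log (t + 2) := by simp [ha, ht]; ring_nf
    have key : Real.log (t+2) + Real.log t < 2 * Real.log (t+1) := by
      have h1 : Real.log (t+2) + Real.log t = Real.log ((t+2) * t) :=
        (Real.log_mul (by linarith) (by linarith)).symm
      have h2 : (2:ℝ) * Real.log (t+1) = Real.log ((t+1)^2) := by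
        rw [Real.log_pow]; push_cast; ring
      rw [h1, h2]
      apply Real.log_lt_log (by nlinarith)
      nlinarith
    have : Δ₂a m = (Real.log (t+2) - Real.log (t+1)) - (Real.log (t+1) - Real.log t) := by
      simp only [hΔ₂a, hΔa, e1]
      have e3 : a (m+1+1) = Real.log (t+2) := by
        simp only [ha, ht]; norm_num; ring_nf
      have e4 : a m = Real.log t := by simp only [ha, ht]
      rw [e3, e4]
    rw [this]; linarith
  -- the Bernstein-form functions
  set G₁ : ℝ → ℝ := fun x => ((j+1:ℕ) + 1 : ℝ) * Bern (j+1) Δa x with hG₁def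
  set G₂ : ℝ → ℝ := fun x => ((j+1:ℕ) + 1 : ℝ) * (((j:ℕ) + 1 : ℝ) * Bern j Δ₂a x) with hG₂def
  have hGderiv : ∀ x : ℝ, HasDerivAt (Bern (j+2) a) (G₁ x) x := fun x =>
    Bern_hasDerivAt (j+1) a x
  have hG₁deriv : ∀ x : ℝ, HasDerivAt G₁ (G₂ x) x := fun x =>
    (Bern_hasDerivAt j Δa x).const_mul _
  have hG₁pos : ∀ x ∈ Set.Icc (0:ℝ) 1, 0 < G₁ x := by
    intro x hx
    have := Bern_pos (j+1) Δa (fun m _ => hΔpos m) hx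
    have h2 : (0:ℝ) < ((j+1:ℕ) + 1 : ℝ) := by positivity
    exact mul_pos h2 this
  have hG₂neg : ∀ x ∈ Set.Icc (0:ℝ) 1, G₂ x < 0 := by
    intro x hx
    have := Bern_neg j Δ₂a (fun m _ => hΔ₂neg m) hx
    have h2 : (0:ℝ) < ((j+1:ℕ) + 1 : ℝ) := by positivity
    have h3 : (0:ℝ) < ((j:ℕ) + 1 : ℝ) := by positivity
    exact mul_neg_of_pos_of_neg h2 (mul_neg_of_pos_of_neg h3 this)
  -- JF is Bern ∘ F
  have hJF : JF (j+3) ω₀ F = fun v => Bern (j+2) a (F v) := rfl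
  -- F maps Icc into Icc 0 1
  have hFc : ContinuousOn F (Set.Icc 0 vbar) := fun v hv =>
    (hF v hv).continuousAt.continuousWithinAt
  have hmono : MonotoneOn F (Set.Icc 0 vbar) := by
    apply monotoneOn_of_deriv_nonneg (convex_Icc 0 vbar) hFc
    · intro x hx
      exact ((hF x (interior_subset hx)).differentiableAt).differentiableWithinAt
    · intro x hx
      rw [(hF x (interior_subset hx)).deriv]
      exact (hfpos x (interior_subset hx)).le
  have hFmem : ∀ v ∈ Set.Icc (0:ℝ) vbar, F v ∈ Set.Icc (0:ℝ) 1 := by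
    intro v hvm
    constructor
    · rw [← hF0]; exact hmono ⟨le_rfl, hv.le⟩ hvm hvm.1
    · rw [← hF1]; exact hmono hvm ⟨hv.le, le_rfl⟩ hvm.2
  -- canonical first and second derivatives
  set g₀ : ℝ → ℝ := fun v => G₁ (F v) * f v with hg₀def
  set h₀ : ℝ → ℝ := fun v => G₂ (F v) * f v * f v + G₁ (F v) * f' v with hh₀def
  have hg₀ : ∀ v ∈ Set.Icc (0:ℝ) vbar, HasDerivAt (JF (j+3) ω₀ F) (g₀ v) v := by
    intro v hvm
    rw [hJF]
    exact (hGderiv (F v)).comp v (hF v hvm)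
  have hh₀ : ∀ v ∈ Set.Icc (0:ℝ) vbar, HasDerivAt g₀ (h₀ v) v := by
    intro v hvm
    exact ((hG₁deriv (F v)).comp v (hF v hvm)).mul (hf v hvm)
  have hh₀neg : ∀ v ∈ Set.Icc (0:ℝ) vbar, h₀ v < 0 := by
    intro v hvm
    have h1 : G₂ (F v) * f v * f v < 0 :=
      mul_neg_of_neg_of_pos (mul_neg_of_neg_of_pos (hG₂neg _ (hFmem v hvm)) (hfpos v hvm))
        (hfpos v hvm)
    have h2 : G₁ (F v) * f' v ≤ 0 :=
      mul_nonpos_of_nonneg_of_nonpos (hG₁pos _ (hFmem v hvm)).le (hf'le v hvm)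
    show G₂ (F v) * f v * f v + G₁ (F v) * f' v < 0
    linarith
  constructor
  · apply strictConcaveOn_of_deriv2_neg (convex_Icc 0 vbar)
    · exact fun v hvm => (hg₀ v hvm).continuousAt.continuousWithinAt
    · intro x hx
      have hxm : x ∈ Set.Icc (0:ℝ) vbar := interior_subset hx
      have hnhds : Set.Icc (0:ℝ) vbar ∈ nhds x := mem_interior_iff_mem_nhds.mp hx
      have heq : deriv (JF (j+3) ω₀ F) =ᶠ[nhds x] g₀ :=
        Filter.eventually_of_mem hnhds (fun y hy => (hg₀ y hy).deriv)
      have : deriv^[2] (JF (j+3) ω₀ F) x = deriv (deriv (JF (j+3) ω₀ F)) x := by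
        simp [Function.iterate_succ, Function.iterate_one]
      rw [this, heq.deriv_eq, (hh₀ x hxm).deriv]
      exact hh₀neg x hxm
  · intro g h hg hh v hvm
    have hg_eq : ∀ w ∈ Set.Icc (0:ℝ) vbar, g₀ w = g w := fun w hw =>
      ((hg₀ w hw).unique (hg w hw))
    have h1 : HasDerivWithinAt g₀ (h v) (Set.Icc 0 vbar) v :=
      ((hh v hvm).hasDerivWithinAt).congr hg_eq (hg_eq v hvm)
    have h2 : HasDerivWithinAt g₀ (h₀ v) (Set.Icc 0 vbar) v :=
      (hh₀ v hvm).hasDerivWithinAt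
    have hud : UniqueDiffWithinAt ℝ (Set.Icc (0:ℝ) vbar) v := uniqueDiffOn_Icc hv v hvm
    have : h v = h₀ v := by
      rw [← h1.derivWithin hud, ← h2.derivWithin hud]
    rw [this]
    exact hh₀neg v hvm
end
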